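/- arXiv:2204.10506 — 7 statements merged into one kernel-verified Lean document; each statement's English description precedes it below -/
import Mathlib

section
/- If f ∈ C^{2,2}([0,1]²), then |f(x,y) − B_{n,m}f(x,y)| ≤ (1/2)[ x(1−x)/n · ‖f^{(2,0)}‖ + y(1−y)/m · ‖f^{(0,2)}‖ ] for all (x,y) ∈ [0,1]². -/
open Set Finset

/-- Bernstein basis polynomial `p_{n,k}(x) = C(n,k) x^k (1-x)^{n-k}`. -/
noncomputable def bp (n k : ℕ) (x : ℝ) : ℝ :=
  (n.choose k : ℝ) * x ^ k * (1 - x) ^ (n - k)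

/-- AKR node `t_{n,k}^j = (k(k-1)⋯(k-j+1)/(n(n-1)⋯(n-j+1)))^{1/j}`. -/
noncomputable def akrNode (n j k : ℕ) : ℝ :=
  ((∏ i ∈ Finset.range j, ((k : ℝ) - i)) / (∏ i ∈ Finset.range j, ((n : ℝ) - i))) ^ ((j : ℝ)⁻¹)

/-- Classical Bernstein operator. -/
noncomputable def bern (n : ℕ) (f : ℝ → ℝ) (x : ℝ) : ℝ :=
  ∑ k ∈ Finset.range (n + 1), f ((k : ℝ) / n) * bp n k x

/-- Aldaz–Kounchev–Render operator. -/
noncomputable def akr (n j : ℕ) (f : ℝ → ℝ) (x : ℝ) : ℝ :=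
  ∑ k ∈ Finset.range (n + 1), f (akrNode n j k) * bp n k x

/-- Bivariate tensor-product Bernstein operator. -/
noncomputable def bern2 (n m : ℕ) (f : ℝ → ℝ → ℝ) (x y : ℝ) : ℝ :=
  ∑ i ∈ Finset.range (n + 1), ∑ k ∈ Finset.range (m + 1),
    f ((i : ℝ) / n) ((k : ℝ) / m) * bp n i x * bp m k y

/-- Bivariate tensor-product AKR operator. -/
noncomputable def akr2 (n m j : ℕ) (f : ℝ → ℝ → ℝ) (x y : ℝ) : ℝ :=
  ∑ i ∈ Finset.range (n + 1), ∑ k ∈ Finset.range (m + 1),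
    f (akrNode n j i) (akrNode m j k) * bp n i x * bp m k y

open intervalIntegral

lemma bp_eval (n k : ℕ) (x : ℝ) : (bernsteinPolynomial ℝ n k).eval x = bp n k x := by
  simp [bernsteinPolynomial, bp]

lemma bp_nonneg (n k : ℕ) {x : ℝ} (hx : x ∈ Icc (0:ℝ) 1) : 0 ≤ bp n k x := by
  have h1 : (0:ℝ) ≤ x := hx.1
  have h2 : (0:ℝ) ≤ 1 - x := by linarith [hx.2]
  unfold bp; positivity

lemma bp_sum (n : ℕ) (x : ℝ) : ∑ k ∈ Finset.range (n+1), bp n k x = 1 := by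
  have := congrArg (Polynomial.eval x) (bernsteinPolynomial.sum ℝ n)
  simpa [Polynomial.eval_finset_sum, bp_eval] using this

lemma bp_sum_k (n : ℕ) (x : ℝ) :
    ∑ k ∈ Finset.range (n+1), (k:ℝ) * bp n k x = n * x := by
  have := congrArg (Polynomial.eval x) (bernsteinPolynomial.sum_smul ℝ n)
  simpa [Polynomial.eval_finset_sum, bp_eval] using this

lemma bp_sum_kk (n : ℕ) (x : ℝ) :
    ∑ k ∈ Finset.range (n+1), ((k:ℝ) * ((k:ℝ) - 1)) * bp n k x = (n * ((n:ℝ)-1)) * x^2 := by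
  have h := congrArg (Polynomial.eval x) (bernsteinPolynomial.sum_mul_smul ℝ n)
  simp only [Polynomial.eval_finset_sum, Polynomial.eval_smul, nsmul_eq_mul, smul_eq_mul,
    Polynomial.eval_mul, Polynomial.eval_natCast, Polynomial.eval_pow, Polynomial.eval_X,
    bp_eval] at h
  have e : ∀ k : ℕ, ((k * (k-1) : ℕ) : ℝ) * bp n k x = ((k:ℝ) * ((k:ℝ)-1)) * bp n k x := by
    intro k; cases k with
    | zero => simp
    | succ j => push_cast [Nat.succ_sub_one]; ring
  rw [Finset.sum_congr rfl (fun k _ => e k)] at h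
  rw [h]
  cases n with
  | zero => simp
  | succ j => push_cast [Nat.succ_sub_one]; ring

lemma bp_moment1 (n : ℕ) (hn : 1 ≤ n) (x : ℝ) :
    ∑ k ∈ Finset.range (n+1), ((k:ℝ)/n - x) * bp n k x = 0 := by
  have hn' : (n:ℝ) ≠ 0 := by positivity
  have h1 := bp_sum n x
  have h2 := bp_sum_k n x
  have : ∑ k ∈ Finset.range (n+1), ((k:ℝ)/n - x) * bp n k x
      = (1/n) * ∑ k ∈ Finset.range (n+1), (k:ℝ) * bp n k x
        - x * ∑ k ∈ Finset.range (n+1), bp n k x := by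
    rw [Finset.mul_sum, Finset.mul_sum, ← Finset.sum_sub_distrib]
    refine Finset.sum_congr rfl fun k _ => ?_
    field_simp
  rw [this, h1, h2]; field_simp; ring

lemma bp_moment2 (n : ℕ) (hn : 1 ≤ n) (x : ℝ) :
    ∑ k ∈ Finset.range (n+1), ((k:ℝ)/n - x)^2 * bp n k x = x * (1-x) / n := by
  have hn' : (n:ℝ) ≠ 0 := by positivity
  have h1 := bp_sum n x
  have h2 := bp_sum_k n x
  have h3 := bp_sum_kk n x
  have : ∑ k ∈ Finset.range (n+1), ((k:ℝ)/n - x)^2 * bp n k x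
      = (1/n^2) * ∑ k ∈ Finset.range (n+1), ((k:ℝ) * ((k:ℝ)-1)) * bp n k x
        + (1/n^2 - 2*x/n) * ∑ k ∈ Finset.range (n+1), (k:ℝ) * bp n k x
        + x^2 * ∑ k ∈ Finset.range (n+1), bp n k x := by
    rw [Finset.mul_sum, Finset.mul_sum, Finset.mul_sum, ← Finset.sum_add_distrib,
      ← Finset.sum_add_distrib]
    refine Finset.sum_congr rfl fun k _ => ?_
    field_simp; ring
  rw [this, h1, h2, h3]; field_simp; ring

lemma taylor1 {g g' g'' : ℝ → ℝ} {M : ℝ}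
    (h1 : ∀ t ∈ Icc (0:ℝ) 1, HasDerivWithinAt g (g' t) (Icc 0 1) t)
    (h2 : ∀ t ∈ Icc (0:ℝ) 1, HasDerivWithinAt g' (g'' t) (Icc 0 1) t)
    (hM : ∀ t ∈ Icc (0:ℝ) 1, |g'' t| ≤ M)
    {a b : ℝ} (ha : a ∈ Icc (0:ℝ) 1) (hb : b ∈ Icc (0:ℝ) 1) :
    |g b - g a - g' a * (b - a)| ≤ M / 2 * (b - a)^2 := by
  have hsub : Set.uIcc a b ⊆ Icc (0:ℝ) 1 := Set.uIcc_subset_Icc ha hb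
  have lip : ∀ t ∈ Icc (0:ℝ) 1, |g' t - g' a| ≤ M * |t - a| := by
    intro t ht
    have := (convex_Icc (0:ℝ) 1).norm_image_sub_le_of_norm_hasDerivWithin_le h2
      (fun u hu => by simpa [Real.norm_eq_abs] using hM u hu) ha ht
    simpa [Real.norm_eq_abs] using this
  have hgc : ContinuousOn g (Icc (0:ℝ) 1) := fun t ht => (h1 t ht).continuousWithinAt
  have hg'c : ContinuousOn g' (Icc (0:ℝ) 1) := fun t ht => (h2 t ht).continuousWithinAt
  have hint : IntervalIntegrable g' MeasureTheory.volume a b :=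
    (hg'c.mono hsub).intervalIntegrable
  have ftc : ∫ t in a..b, g' t = g b - g a := by
    apply intervalIntegral.integral_eq_sub_of_hasDeriv_right (hgc.mono hsub) ?_ hint
    intro t ht
    have h0 : 0 < t := lt_of_le_of_lt (le_min ha.1 hb.1) ht.1
    have hlt : t < 1 := lt_of_lt_of_le ht.2 (max_le ha.2 hb.2)
    exact ((h1 t ⟨h0.le, hlt.le⟩).hasDerivAt (Icc_mem_nhds h0 hlt)).hasDerivWithinAt
  have key : g b - g a - g' a * (b - a) = ∫ t in a..b, (g' t - g' a) := by
    rw [intervalIntegral.integral_sub hint intervalIntegrable_const, ftc,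
      intervalIntegral.integral_const, smul_eq_mul]
    ring
  rw [key]
  have hM0 : 0 ≤ M := le_trans (abs_nonneg _) (hM a ha)
  rcases le_total a b with hab | hab
  · have bound := intervalIntegral.norm_integral_le_abs_of_norm_le
      (f := fun t => g' t - g' a) (g := fun t => M * (t - a)) (a := a) (b := b)
      (μ := MeasureTheory.volume) ?_ ?_
    · calc |∫ t in a..b, (g' t - g' a)| ≤ |∫ t in a..b, M * (t - a)| := by
            simpa [Real.norm_eq_abs] using bound
        _ = M / 2 * (b - a)^2 := by
            rw [intervalIntegral.integral_const_mul,
              intervalIntegral.integral_sub intervalIntegrable_id intervalIntegrable_const,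
              integral_id, intervalIntegral.integral_const, smul_eq_mul]
            rw [abs_of_nonneg (by nlinarith [mul_nonneg hM0 (sq_nonneg (b - a))])]
            ring
    · refine MeasureTheory.ae_restrict_of_forall_mem measurableSet_uIoc fun t ht => ?_
      rw [Set.uIoc_of_le hab] at ht
      have ht' : t ∈ Icc (0:ℝ) 1 := ⟨le_trans ha.1 ht.1.le, le_trans ht.2 hb.2⟩
      have := lip t ht'
      rw [abs_of_nonneg (by linarith [ht.1.le] : (0:ℝ) ≤ t - a)] at this
      simpa [Real.norm_eq_abs] using this
    · exact ((continuous_const.mul (continuous_id.sub continuous_const)).continuousOn).intervalIntegrable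
  · have bound := intervalIntegral.norm_integral_le_abs_of_norm_le
      (f := fun t => g' t - g' a) (g := fun t => M * (a - t)) (a := a) (b := b)
      (μ := MeasureTheory.volume) ?_ ?_
    · calc |∫ t in a..b, (g' t - g' a)| ≤ |∫ t in a..b, M * (a - t)| := by
            simpa [Real.norm_eq_abs] using bound
        _ = M / 2 * (b - a)^2 := by
            rw [intervalIntegral.integral_const_mul,
              intervalIntegral.integral_sub intervalIntegrable_const intervalIntegrable_id,
              integral_id, intervalIntegral.integral_const, smul_eq_mul]
            rw [abs_of_nonpos (by nlinarith [mul_nonneg hM0 (sq_nonneg (b - a))])]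
            ring
    · refine MeasureTheory.ae_restrict_of_forall_mem measurableSet_uIoc fun t ht => ?_
      rw [Set.uIoc_of_ge hab] at ht
      have ht' : t ∈ Icc (0:ℝ) 1 := ⟨le_trans hb.1 ht.1.le, le_trans ht.2 ha.2⟩
      have h0 := lip t ht'
      rw [abs_of_nonpos (by linarith [ht.2] : t - a ≤ 0)] at h0
      have : |g' t - g' a| ≤ M * (a - t) := by linarith
      simpa [Real.norm_eq_abs] using this
    · exact ((continuous_const.mul (continuous_const.sub continuous_id)).continuousOn).intervalIntegrable

lemma sup_bd {F : ℝ → ℝ → ℝ}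
    (hc : ContinuousOn (fun p : ℝ × ℝ => F p.1 p.2) (Set.Icc (0:ℝ) 1 ×ˢ Set.Icc (0:ℝ) 1))
    {a b : ℝ} (ha : a ∈ Icc (0:ℝ) 1) (hb : b ∈ Icc (0:ℝ) 1) :
    |F a b| ≤ ⨆ p : Set.Icc (0:ℝ) 1 × Set.Icc (0:ℝ) 1, |F p.1 p.2| := by
  have hcont : Continuous (fun p : Set.Icc (0:ℝ) 1 × Set.Icc (0:ℝ) 1 => |F p.1 p.2|) := by
    apply Continuous.abs
    exact hc.comp_continuous (by fun_prop) (fun p => Set.mk_mem_prod p.1.2 p.2.2)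
  have hbdd : BddAbove (Set.range fun p : Set.Icc (0:ℝ) 1 × Set.Icc (0:ℝ) 1 => |F p.1 p.2|) :=
    (isCompact_range hcont).bddAbove
  exact le_ciSup hbdd (⟨⟨a, ha⟩, ⟨b, hb⟩⟩)

lemma node_mem {N i : ℕ} (hN : 1 ≤ N) (hi : i ∈ Finset.range (N+1)) :
    (i:ℝ)/N ∈ Icc (0:ℝ) 1 := by
  have hi' : i ≤ N := Finset.mem_range_succ_iff.mp hi
  have hN' : (0:ℝ) < N := by exact_mod_cast Nat.pos_of_ne_zero (by omega)
  constructor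
  · positivity
  · rw [div_le_one hN']; exact_mod_cast hi'

theorem stmt3 (n m : ℕ) (hn : 1 ≤ n) (hm : 1 ≤ m) (f fx fy fxx fyy : ℝ → ℝ → ℝ)
    (hfx : ∀ y ∈ Icc (0:ℝ) 1, ∀ x ∈ Icc (0:ℝ) 1,
      HasDerivWithinAt (fun u => f u y) (fx x y) (Icc 0 1) x)
    (hfxx : ∀ y ∈ Icc (0:ℝ) 1, ∀ x ∈ Icc (0:ℝ) 1,
      HasDerivWithinAt (fun u => fx u y) (fxx x y) (Icc 0 1) x)
    (hfy : ∀ x ∈ Icc (0:ℝ) 1, ∀ y ∈ Icc (0:ℝ) 1,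
      HasDerivWithinAt (fun v => f x v) (fy x y) (Icc 0 1) y)
    (hfyy : ∀ x ∈ Icc (0:ℝ) 1, ∀ y ∈ Icc (0:ℝ) 1,
      HasDerivWithinAt (fun v => fy x v) (fyy x y) (Icc 0 1) y)
    (hcxx : ContinuousOn (fun p : ℝ × ℝ => fxx p.1 p.2) (Set.Icc (0:ℝ) 1 ×ˢ Set.Icc (0:ℝ) 1))
    (hcyy : ContinuousOn (fun p : ℝ × ℝ => fyy p.1 p.2) (Set.Icc (0:ℝ) 1 ×ˢ Set.Icc (0:ℝ) 1)) :
    ∀ x ∈ Icc (0:ℝ) 1, ∀ y ∈ Icc (0:ℝ) 1,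
      |f x y - bern2 n m f x y| ≤
        (1 / 2) * (x * (1 - x) / n *
            (⨆ p : Set.Icc (0:ℝ) 1 × Set.Icc (0:ℝ) 1, |fxx p.1 p.2|) +
          y * (1 - y) / m *
            (⨆ p : Set.Icc (0:ℝ) 1 × Set.Icc (0:ℝ) 1, |fyy p.1 p.2|)) := by
  intro x hx y hy
  set M1 := ⨆ p : Set.Icc (0:ℝ) 1 × Set.Icc (0:ℝ) 1, |fxx p.1 p.2| with hM1def
  set M2 := ⨆ p : Set.Icc (0:ℝ) 1 × Set.Icc (0:ℝ) 1, |fyy p.1 p.2| with hM2def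
  set A : ℕ → ℕ → ℝ := fun i k =>
    f ((i:ℝ)/n) ((k:ℝ)/m) - f x ((k:ℝ)/m) - fx x ((k:ℝ)/m) * ((i:ℝ)/n - x) with hAdef
  set B : ℕ → ℝ := fun k =>
    f x ((k:ℝ)/m) - f x y - fy x y * ((k:ℝ)/m - y) with hBdef
  have hA : ∀ i ∈ Finset.range (n+1), ∀ k ∈ Finset.range (m+1),
      |A i k| ≤ M1/2 * ((i:ℝ)/n - x)^2 := by
    intro i hi k hk
    have hkm : (k:ℝ)/m ∈ Icc (0:ℝ) 1 := node_mem hm hk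
    exact taylor1 (hfx ((k:ℝ)/m) hkm) (hfxx ((k:ℝ)/m) hkm)
      (fun t ht => sup_bd hcxx ht hkm) hx (node_mem hn hi)
  have hB : ∀ k ∈ Finset.range (m+1), |B k| ≤ M2/2 * ((k:ℝ)/m - y)^2 := by
    intro k hk
    exact taylor1 (hfy x hx) (hfyy x hx) (fun t ht => sup_bd hcyy hx ht) hy (node_mem hm hk)
  have hsplit : f x y - bern2 n m f x y =
      -(∑ i ∈ Finset.range (n+1), ∑ k ∈ Finset.range (m+1), A i k * bp n i x * bp m k y)
      - ∑ k ∈ Finset.range (m+1), B k * bp m k y := by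
    have e1 : bern2 n m f x y =
        (∑ i ∈ Finset.range (n+1), ∑ k ∈ Finset.range (m+1), A i k * bp n i x * bp m k y)
        + (∑ i ∈ Finset.range (n+1), ((i:ℝ)/n - x) * bp n i x)
            * (∑ k ∈ Finset.range (m+1), fx x ((k:ℝ)/m) * bp m k y)
        + (∑ i ∈ Finset.range (n+1), bp n i x)
            * (∑ k ∈ Finset.range (m+1), B k * bp m k y)
        + (∑ i ∈ Finset.range (n+1), bp n i x)
            * (∑ k ∈ Finset.range (m+1), fy x y * ((k:ℝ)/m - y) * bp m k y)
        + (∑ i ∈ Finset.range (n+1), f x y * bp n i x)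
            * (∑ k ∈ Finset.range (m+1), bp m k y) := by
      unfold bern2
      rw [Finset.sum_mul_sum, Finset.sum_mul_sum, Finset.sum_mul_sum, Finset.sum_mul_sum,
        ← Finset.sum_add_distrib, ← Finset.sum_add_distrib, ← Finset.sum_add_distrib,
        ← Finset.sum_add_distrib]
      refine Finset.sum_congr rfl fun i _ => ?_
      rw [← Finset.sum_add_distrib, ← Finset.sum_add_distrib, ← Finset.sum_add_distrib,
        ← Finset.sum_add_distrib]
      refine Finset.sum_congr rfl fun k _ => ?_
      simp only [hAdef, hBdef]
      ring
    have z1 : ∑ k ∈ Finset.range (m+1), fy x y * ((k:ℝ)/m - y) * bp m k y = 0 := by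
      have : ∑ k ∈ Finset.range (m+1), fy x y * ((k:ℝ)/m - y) * bp m k y
          = fy x y * ∑ k ∈ Finset.range (m+1), ((k:ℝ)/m - y) * bp m k y := by
        rw [Finset.mul_sum]; exact Finset.sum_congr rfl fun k _ => by ring
      rw [this, bp_moment1 m hm y, mul_zero]
    have z2 : ∑ i ∈ Finset.range (n+1), f x y * bp n i x = f x y := by
      rw [← Finset.mul_sum, bp_sum, mul_one]
    rw [e1, bp_moment1 n hn x, bp_sum n x, bp_sum m y, z1, z2]
    ring
  have hbpx : ∀ i, 0 ≤ bp n i x := fun i => bp_nonneg n i hx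
  have hbpy : ∀ k, 0 ≤ bp m k y := fun k => bp_nonneg m k hy
  have hSA : |∑ i ∈ Finset.range (n+1), ∑ k ∈ Finset.range (m+1),
      A i k * bp n i x * bp m k y| ≤ M1/2 * (x * (1-x) / n) := by
    calc |∑ i ∈ Finset.range (n+1), ∑ k ∈ Finset.range (m+1), A i k * bp n i x * bp m k y|
        ≤ ∑ i ∈ Finset.range (n+1), ∑ k ∈ Finset.range (m+1),
            (M1/2 * ((i:ℝ)/n - x)^2) * bp n i x * bp m k y := by
          refine (Finset.abs_sum_le_sum_abs _ _).trans
            (Finset.sum_le_sum fun i hi => ?_)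
          refine (Finset.abs_sum_le_sum_abs _ _).trans
            (Finset.sum_le_sum fun k hk => ?_)
          rw [abs_mul, abs_mul, abs_of_nonneg (hbpx i), abs_of_nonneg (hbpy k)]
          exact mul_le_mul_of_nonneg_right
            (mul_le_mul_of_nonneg_right (hA i hi k hk) (hbpx i)) (hbpy k)
      _ = (∑ i ∈ Finset.range (n+1), (M1/2 * ((i:ℝ)/n - x)^2) * bp n i x)
            * (∑ k ∈ Finset.range (m+1), bp m k y) := by
          rw [Finset.sum_mul_sum]
      _ = M1/2 * (x * (1-x) / n) := by
          rw [bp_sum m y, mul_one]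
          have : ∑ i ∈ Finset.range (n+1), (M1/2 * ((i:ℝ)/n - x)^2) * bp n i x
              = M1/2 * ∑ i ∈ Finset.range (n+1), ((i:ℝ)/n - x)^2 * bp n i x := by
            rw [Finset.mul_sum]; exact Finset.sum_congr rfl fun i _ => by ring
          rw [this, bp_moment2 n hn x]
  have hSB : |∑ k ∈ Finset.range (m+1), B k * bp m k y| ≤ M2/2 * (y * (1-y) / m) := by
    calc |∑ k ∈ Finset.range (m+1), B k * bp m k y|
        ≤ ∑ k ∈ Finset.range (m+1), (M2/2 * ((k:ℝ)/m - y)^2) * bp m k y := by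
          refine (Finset.abs_sum_le_sum_abs _ _).trans
            (Finset.sum_le_sum fun k hk => ?_)
          rw [abs_mul, abs_of_nonneg (hbpy k)]
          exact mul_le_mul_of_nonneg_right (hB k hk) (hbpy k)
      _ = M2/2 * (y * (1-y) / m) := by
          have : ∑ k ∈ Finset.range (m+1), (M2/2 * ((k:ℝ)/m - y)^2) * bp m k y
              = M2/2 * ∑ k ∈ Finset.range (m+1), ((k:ℝ)/m - y)^2 * bp m k y := by
            rw [Finset.mul_sum]; exact Finset.sum_congr rfl fun k _ => by ring
          rw [this, bp_moment2 m hm y]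
  calc |f x y - bern2 n m f x y|
      ≤ |∑ i ∈ Finset.range (n+1), ∑ k ∈ Finset.range (m+1), A i k * bp n i x * bp m k y|
        + |∑ k ∈ Finset.range (m+1), B k * bp m k y| := by
        rw [hsplit]
        exact (abs_sub _ _).trans (by rw [abs_neg])
    _ ≤ M1/2 * (x * (1-x) / n) + M2/2 * (y * (1-y) / m) := add_le_add hSA hSB
    _ = (1/2) * (x * (1-x) / n * M1 + y * (1-y) / m * M2) := by ring
end

section
/- Let j ≥ 2 be an integer and f ∈ C²[0,1]. Then f is increasing on [0,1] and the function g(x) := f(x^{1/j}) is convex on [0,1] if and only if f'(x) ≥ 0 and x f''(x) − (j−1) f'(x) ≥ 0 for all x ∈ [0,1]. -/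
open Set Finset
open Filter Topology

/-- derivative nonneg at an interior point of monotonicity -/
lemma lemA {φ : ℝ → ℝ} {s : Set ℝ} {x d : ℝ} (hs : s ∈ 𝓝 x) (hm : MonotoneOn φ s)
    (hd : HasDerivAt φ d x) : 0 ≤ d := by
  have hx : x ∈ s := mem_of_mem_nhds hs
  have hT := hasDerivAt_iff_tendsto_slope.mp hd
  refine ge_of_tendsto hT ?_
  have hmem : ∀ᶠ y in 𝓝[≠] x, y ∈ s :=
    eventually_nhdsWithin_of_eventually_nhds (eventually_of_mem hs fun y hy => hy)
  filter_upwards [hmem, self_mem_nhdsWithin] with y hys hyx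
  rw [slope_def_field]
  rcases lt_or_gt_of_ne (show y ≠ x from hyx) with h | h
  · exact div_nonneg_of_nonpos (sub_nonpos.mpr (hm hys hx h.le)) (by linarith)
  · exact div_nonneg (sub_nonneg.mpr (hm hx hys h.le)) (by linarith)

/-- one-sided derivative nonneg for a function monotone on `[0,1]` -/
lemma lemB {f f' : ℝ → ℝ} {x : ℝ} (hx : x ∈ Icc (0:ℝ) 1)
    (hm : MonotoneOn f (Icc 0 1)) (hd : HasDerivWithinAt f (f' x) (Icc 0 1) x) :
    0 ≤ f' x := by
  have hT := hasDerivWithinAt_iff_tendsto_slope.mp hd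
  have hne : (𝓝[Icc (0:ℝ) 1 \ {x}] x).NeBot := by
    rcases lt_or_eq_of_le hx.2 with h1 | h1
    · have hsub : Ioc x 1 ⊆ Icc 0 1 \ {x} :=
        fun y hy => ⟨⟨le_trans hx.1 hy.1.le, hy.2⟩, hy.1.ne'⟩
      have hcl : x ∈ closure (Ioc x 1) := by
        rw [closure_Ioc h1.ne]; exact ⟨le_refl x, hx.2⟩
      exact mem_closure_iff_nhdsWithin_neBot.mp (closure_mono hsub hcl)
    · have hsub : Set.Ico (0:ℝ) 1 ⊆ Icc 0 1 \ {x} :=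
        fun y hy => ⟨⟨hy.1, hy.2.le⟩, by rw [← h1] at hy; exact hy.2.ne⟩
      have hcl : x ∈ closure (Ico (0:ℝ) 1) := by
        rw [closure_Ico (by norm_num : (0:ℝ) ≠ 1)]; exact hx
      exact mem_closure_iff_nhdsWithin_neBot.mp (closure_mono hsub hcl)
  refine ge_of_tendsto hT ?_
  filter_upwards [self_mem_nhdsWithin] with y hy
  obtain ⟨hyI, hyx⟩ := hy
  rw [slope_def_field]
  rcases lt_or_gt_of_ne (show y ≠ x from hyx) with h | h
  · exact div_nonneg_of_nonpos (sub_nonpos.mpr (hm hyI hx h.le)) (by linarith)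
  · exact div_nonneg (sub_nonneg.mpr (hm hx hyI h.le)) (by linarith)

theorem stmt4 (j : ℕ) (hj : 2 ≤ j) (f f' f'' : ℝ → ℝ)
    (hf' : ∀ x ∈ Icc (0:ℝ) 1, HasDerivWithinAt f (f' x) (Icc 0 1) x)
    (hf'' : ∀ x ∈ Icc (0:ℝ) 1, HasDerivWithinAt f' (f'' x) (Icc 0 1) x)
    (hc : ContinuousOn f'' (Icc 0 1)) :
    (MonotoneOn f (Icc 0 1) ∧ ConvexOn ℝ (Icc 0 1) (fun x => f (x ^ ((j : ℝ)⁻¹)))) ↔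
      (∀ x ∈ Icc (0:ℝ) 1, 0 ≤ f' x ∧ 0 ≤ x * f'' x - ((j : ℝ) - 1) * f' x) := by
  have hj2 : (2:ℝ) ≤ (j:ℝ) := by exact_mod_cast hj
  have hjpos : (0:ℝ) < (j:ℝ) := by linarith
  set c : ℝ := (j:ℝ)⁻¹ with hcdef
  have hc0 : 0 < c := inv_pos.mpr hjpos
  have hfc : ContinuousOn f (Icc 0 1) := fun x hx => (hf' x hx).continuousWithinAt
  have hfc' : ContinuousOn f' (Icc 0 1) := fun x hx => (hf'' x hx).continuousWithinAt
  set g : ℝ → ℝ := fun x => f (x ^ c) with hg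
  set φ : ℝ → ℝ := fun x => f' (x ^ c) * (c * x ^ (c - 1)) with hφ
  have hmem : ∀ x ∈ Ioo (0:ℝ) 1, x ^ c ∈ Ioo (0:ℝ) 1 := fun x hx =>
    ⟨Real.rpow_pos_of_pos hx.1 c, Real.rpow_lt_one hx.1.le hx.2 hc0⟩
  have hgd : ∀ x ∈ Ioo (0:ℝ) 1, HasDerivAt g (φ x) x := by
    intro x hx
    have hu := hmem x hx
    have hfu : HasDerivAt f (f' (x ^ c)) (x ^ c) :=
      (hf' _ (Ioo_subset_Icc_self hu)).hasDerivAt (Icc_mem_nhds hu.1 hu.2)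
    have hr : HasDerivAt (fun y : ℝ => y ^ c) (c * x ^ (c - 1)) x :=
      Real.hasDerivAt_rpow_const (Or.inl hx.1.ne')
    exact hfu.comp x hr
  have hφd : ∀ x ∈ Ioo (0:ℝ) 1,
      HasDerivAt φ (c ^ 2 * (x ^ (c - 2) * (x ^ c * f'' (x ^ c) - ((j:ℝ) - 1) * f' (x ^ c)))) x := by
    intro x hx
    have hu := hmem x hx
    have hf'u : HasDerivAt f' (f'' (x ^ c)) (x ^ c) :=
      (hf'' _ (Ioo_subset_Icc_self hu)).hasDerivAt (Icc_mem_nhds hu.1 hu.2)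
    have hr : HasDerivAt (fun y : ℝ => y ^ c) (c * x ^ (c - 1)) x :=
      Real.hasDerivAt_rpow_const (Or.inl hx.1.ne')
    have h1 : HasDerivAt (fun y : ℝ => f' (y ^ c)) (f'' (x ^ c) * (c * x ^ (c - 1))) x := by
      exact hf'u.comp x hr
    have h2 : HasDerivAt (fun y : ℝ => c * y ^ (c - 1)) (c * ((c - 1) * x ^ (c - 1 - 1))) x :=
      (Real.hasDerivAt_rpow_const (Or.inl hx.1.ne')).const_mul c
    have hmul := h1.mul h2
    have hxx : x ^ (c - 1 - 1) = x ^ (c - 2) := by rw [show c - 1 - 1 = c - 2 from by ring]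
    have hAA : x ^ (c - 1) * x ^ (c - 1) = x ^ (c - 2) * x ^ c := by
      rw [← Real.rpow_add hx.1, ← Real.rpow_add hx.1]; congr 1; ring
    have h3 : c - 1 = -(((j:ℝ) - 1) * c) := by
      rw [hcdef]; field_simp; ring
    refine hmul.congr_deriv (Eq.symm ?_)
    rw [hxx]
    linear_combination (-(c ^ 2) * f'' (x ^ c)) * hAA + (-c * f' (x ^ c) * x ^ (c - 2)) * h3
  constructor
  · rintro ⟨hmono, hconv⟩
    have hf'nn : ∀ x ∈ Icc (0:ℝ) 1, 0 ≤ f' x := fun x hx => lemB hx hmono (hf' x hx)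
    have hconv' : ConvexOn ℝ (Ioo (0:ℝ) 1) g := hconv.subset Ioo_subset_Icc_self (convex_Ioo 0 1)
    have hmonoD : MonotoneOn (deriv g) (Ioo (0:ℝ) 1) :=
      hconv'.monotoneOn_deriv fun y hy => (hgd y hy).differentiableAt
    have hmonoφ : MonotoneOn φ (Ioo (0:ℝ) 1) := fun a ha b hb hab => by
      rw [← (hgd a ha).deriv, ← (hgd b hb).deriv]; exact hmonoD ha hb hab
    have hkey : ∀ u ∈ Ioo (0:ℝ) 1, 0 ≤ u * f'' u - ((j:ℝ) - 1) * f' u := by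
      intro u hu
      set x : ℝ := u ^ (j:ℝ) with hxdef
      have hx : x ∈ Ioo (0:ℝ) 1 :=
        ⟨Real.rpow_pos_of_pos hu.1 _, Real.rpow_lt_one hu.1.le hu.2 hjpos⟩
      have hxc : x ^ c = u := by
        rw [hxdef, ← Real.rpow_mul hu.1.le, hcdef, mul_inv_cancel₀ (ne_of_gt hjpos),
          Real.rpow_one]
      have hDnn := lemA (isOpen_Ioo.mem_nhds hx) hmonoφ (hφd x hx)
      rw [hxc] at hDnn
      have hp : 0 < c ^ 2 * x ^ (c - 2) :=
        mul_pos (pow_pos hc0 2) (Real.rpow_pos_of_pos hx.1 _)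
      nlinarith [hDnn, hp]
    intro x hx
    refine ⟨hf'nn x hx, ?_⟩
    have hcont : ContinuousOn (fun y => y * f'' y - ((j:ℝ) - 1) * f' y) (Icc 0 1) :=
      (continuousOn_id.mul hc).sub (continuousOn_const.mul hfc')
    have hxcl : x ∈ closure (Ioo (0:ℝ) 1) := by
      rw [closure_Ioo (by norm_num : (0:ℝ) ≠ 1)]; exact hx
    have hne : (𝓝[Ioo (0:ℝ) 1] x).NeBot := mem_closure_iff_nhdsWithin_neBot.mp hxcl
    refine ge_of_tendsto ((hcont x hx).mono Ioo_subset_Icc_self) ?_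
    filter_upwards [self_mem_nhdsWithin] with y hy using hkey y hy
  · intro hyp
    constructor
    · refine monotoneOn_of_hasDerivWithinAt_nonneg (convex_Icc 0 1) hfc
        (fun x hx => ((hf' x (interior_subset hx)).mono interior_subset)) ?_
      intro x hx
      exact (hyp x (interior_subset hx)).1
    · have hrc : ContinuousOn (fun y : ℝ => y ^ c) (Icc 0 1) := fun y _ =>
        (Real.continuousAt_rpow_const y c (Or.inr hc0.le)).continuousWithinAt
      have hmaps : MapsTo (fun y : ℝ => y ^ c) (Icc 0 1) (Icc 0 1) := fun y hy =>
        ⟨Real.rpow_nonneg hy.1 c, Real.rpow_le_one hy.1 hy.2 hc0.le⟩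
      have hgc : ContinuousOn g (Icc (0:ℝ) 1) := hfc.comp hrc hmaps
      refine convexOn_of_deriv2_nonneg (convex_Icc 0 1) hgc ?_ ?_ ?_
      · rw [interior_Icc]
        exact fun x hx => (hgd x hx).differentiableAt.differentiableWithinAt
      · rw [interior_Icc]
        intro x hx
        have hEq : deriv g =ᶠ[𝓝 x] φ :=
          eventuallyEq_of_mem (isOpen_Ioo.mem_nhds hx) fun y hy => (hgd y hy).deriv
        have h2d : HasDerivAt (deriv g)
            (c ^ 2 * (x ^ (c - 2) * (x ^ c * f'' (x ^ c) - ((j:ℝ) - 1) * f' (x ^ c)))) x :=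
          (hφd x hx).congr_of_eventuallyEq hEq
        exact h2d.differentiableAt.differentiableWithinAt
      · rw [interior_Icc]
        intro x hx
        have hEq : deriv g =ᶠ[𝓝 x] φ :=
          eventuallyEq_of_mem (isOpen_Ioo.mem_nhds hx) fun y hy => (hgd y hy).deriv
        have h2d : HasDerivAt (deriv g)
            (c ^ 2 * (x ^ (c - 2) * (x ^ c * f'' (x ^ c) - ((j:ℝ) - 1) * f' (x ^ c)))) x :=
          (hφd x hx).congr_of_eventuallyEq hEq
        have hit : deriv^[2] g x = deriv (deriv g) x := rfl
        rw [hit, h2d.deriv]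
        have hu : x ^ c ∈ Icc (0:ℝ) 1 := Ioo_subset_Icc_self (hmem x hx)
        have hh := (hyp _ hu).2
        exact mul_nonneg (sq_nonneg c) (mul_nonneg (Real.rpow_pos_of_pos hx.1 _).le hh)
end

section
/- Let j ≥ 2 and f ∈ C²[0,1] with f'(x) ≥ 0 and x f''(x) − (j−1) f'(x) ≥ 0 for all x ∈ [0,1]. Then there exists a function φ ∈ C[0,1] ∩ C¹(0,1] with φ ≥ 0, φ' ≥ 0 on (0,1], and lim_{x→0} x^{j−1} φ'(x) finite, such that f(x) = f(0) + ∫_0^x t^{j−1} φ(t) dt for all x ∈ [0,1]. -/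
open Set Finset

theorem stmt5 (j : ℕ) (hj : 2 ≤ j) (f f' f'' : ℝ → ℝ)
    (hf' : ∀ x ∈ Icc (0:ℝ) 1, HasDerivWithinAt f (f' x) (Icc 0 1) x)
    (hf'' : ∀ x ∈ Icc (0:ℝ) 1, HasDerivWithinAt f' (f'' x) (Icc 0 1) x)
    (hc : ContinuousOn f'' (Icc 0 1))
    (hpos : ∀ x ∈ Icc (0:ℝ) 1, 0 ≤ f' x)
    (hconv : ∀ x ∈ Icc (0:ℝ) 1, 0 ≤ x * f'' x - ((j : ℝ) - 1) * f' x) :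
    ∃ φ φd : ℝ → ℝ,
      ContinuousOn φ (Icc 0 1) ∧
      (∀ x ∈ Ioc (0:ℝ) 1, HasDerivWithinAt φ (φd x) (Ioc 0 1) x) ∧
      ContinuousOn φd (Ioc 0 1) ∧
      (∀ x ∈ Icc (0:ℝ) 1, 0 ≤ φ x) ∧
      (∀ x ∈ Ioc (0:ℝ) 1, 0 ≤ φd x) ∧
      (∃ L : ℝ, Filter.Tendsto (fun x => x ^ (j - 1) * φd x)
        (nhdsWithin 0 (Ioi 0)) (nhds L)) ∧
      (∀ x ∈ Icc (0:ℝ) 1, f x = f 0 + ∫ t in (0:ℝ)..x, t ^ (j - 1) * φ t) := by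
  
  obtain ⟨m, rfl⟩ : ∃ m, j = m + 2 := ⟨j - 2, by omega⟩
  -- basic facts
  have h01 : (0:ℝ) ∈ Icc (0:ℝ) 1 := by norm_num
  have hf'c : ContinuousOn f' (Icc 0 1) := fun x hx => (hf'' x hx).continuousWithinAt
  have hf'0 : f' 0 = 0 := by
    have h1 := hconv 0 h01
    have h2 := hpos 0 h01
    push_cast at h1
    nlinarith
  set g : ℝ → ℝ := fun x => f' x / x ^ (m + 1) with hg
  set gd : ℝ → ℝ := fun x => (x * f'' x - ((m:ℝ) + 1) * f' x) / x ^ (m + 2) with hgd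
  -- derivative of g on (0,1]
  have hgderiv : ∀ x ∈ Ioc (0:ℝ) 1, HasDerivWithinAt g (gd x) (Ioc 0 1) x := by
    intro x hx
    have hx0 : x ≠ 0 := ne_of_gt hx.1
    have hxIcc : x ∈ Icc (0:ℝ) 1 := Ioc_subset_Icc_self hx
    have h1 : HasDerivWithinAt f' (f'' x) (Ioc 0 1) x :=
      (hf'' x hxIcc).mono Ioc_subset_Icc_self
    have h2 : HasDerivWithinAt (fun y : ℝ => y ^ (m + 1))
        (((m:ℝ) + 1) * x ^ m) (Ioc 0 1) x := by
      simpa using (hasDerivAt_pow (m + 1) x).hasDerivWithinAt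
    have h3 := h1.div h2 (pow_ne_zero _ hx0)
    convert h3 using 1
    · rfl
    · rfl
    · rfl
    show (x * f'' x - ((m:ℝ) + 1) * f' x) / x ^ (m + 2) = _
    field_simp
    ring
  -- g monotone on Ioo 0 1
  have hgd0 : ∀ x ∈ Ioc (0:ℝ) 1, 0 ≤ gd x := by
    intro x hx
    have hxIcc : x ∈ Icc (0:ℝ) 1 := Ioc_subset_Icc_self hx
    have := hconv x hxIcc
    push_cast at this
    have hnum : 0 ≤ x * f'' x - ((m:ℝ) + 1) * f' x := by linarith
    exact div_nonneg hnum (pow_nonneg hx.1.le _)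
  have hgcont : ContinuousOn g (Ioc 0 1) := by
    apply ContinuousOn.div (hf'c.mono Ioc_subset_Icc_self)
    · exact (continuous_pow _).continuousOn
    · intro x hx; exact pow_ne_zero _ (ne_of_gt hx.1)
  have hgmono : MonotoneOn g (Ioc 0 1) := by
    apply monotoneOn_of_hasDerivWithinAt_nonneg (convex_Ioc 0 1) hgcont
      (f' := gd)
    · intro x hx
      rw [interior_Ioc] at hx ⊢
      exact (hgderiv x (Ioo_subset_Ioc_self hx)).mono Ioo_subset_Ioc_self
    · intro x hx
      rw [interior_Ioc] at hx
      exact hgd0 x (Ioo_subset_Ioc_self hx)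
  have hgnonneg : ∀ x ∈ Ioc (0:ℝ) 1, 0 ≤ g x := by
    intro x hx
    exact div_nonneg (hpos x (Ioc_subset_Icc_self hx)) (pow_nonneg hx.1.le _)
  -- limit L of g at 0+
  set L : ℝ := sInf (g '' Ioo 0 1) with hL
  have hbdd : BddBelow (g '' Ioo 0 1) := by
    refine ⟨0, ?_⟩
    rintro _ ⟨x, hx, rfl⟩
    exact hgnonneg x (Ioo_subset_Ioc_self hx)
  have hgtendsto : Filter.Tendsto g (nhdsWithin 0 (Ioi 0)) (nhds L) :=
    MonotoneOn.tendsto_nhdsWithin_Ioo_right (by norm_num : (Ioo (0:ℝ) 1).Nonempty)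
      (hgmono.mono Ioo_subset_Ioc_self) hbdd
  have hLnonneg : 0 ≤ L := by
    apply le_csInf (by norm_num : (g '' Ioo (0:ℝ) 1).Nonempty)
    rintro _ ⟨x, hx, rfl⟩
    exact hgnonneg x (Ioo_subset_Ioc_self hx)
  -- define φ
  set φ : ℝ → ℝ := fun x => if x = 0 then L else g x with hφ
  have hφeq : EqOn φ g (Ioc 0 1) := by
    intro x hx; simp [hφ, ne_of_gt hx.1]
  refine ⟨φ, gd, ?_, ?_, ?_, ?_, ?_, ?_, ?_⟩
  · -- ContinuousOn φ (Icc 0 1)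
    intro x hx
    rcases eq_or_lt_of_le hx.1 with h0 | h0
    · -- at 0
      rw [← h0]
      rw [ContinuousWithinAt]
      have hφ0 : φ 0 = L := by simp [hφ]
      rw [hφ0]
      rw [nhdsWithin_Icc_eq_nhdsGE (by norm_num : (0:ℝ) < 1)]
      rw [show Ici (0:ℝ) = {0} ∪ Set.Ioi 0 by
        ext y; simp [le_iff_lt_or_eq, or_comm, eq_comm]]
      rw [nhdsWithin_union]
      rw [Filter.tendsto_sup]
      constructor
      · simp only [nhdsWithin_singleton]
        rw [Filter.tendsto_pure_left]
        intro s hs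
        simpa [hφ0] using mem_of_mem_nhds hs
      · exact hgtendsto.congr' (by
          filter_upwards [self_mem_nhdsWithin] with y hy
          simp [hφ, ne_of_gt (Set.mem_Ioi.mp hy)])
    · -- at x > 0
      have : ContinuousWithinAt g (Set.Icc 0 1) x :=
        ((hf'c x hx).div ((continuous_pow _).continuousWithinAt)
          (pow_ne_zero _ (ne_of_gt h0)))
      apply this.congr_of_eventuallyEq
      · filter_upwards [mem_nhdsWithin_of_mem_nhds (Ioi_mem_nhds h0)] with y hy
        simp [hφ, ne_of_gt (Set.mem_Ioi.mp hy)]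
      · simp [hφ, ne_of_gt h0]
  · intro x hx
    exact (hgderiv x hx).congr hφeq (hφeq hx)
  · -- ContinuousOn gd (Ioc 0 1)
    apply ContinuousOn.div
    · apply ContinuousOn.sub
      · exact (continuousOn_id.mul (hc.mono Ioc_subset_Icc_self))
      · exact continuousOn_const.mul (hf'c.mono Ioc_subset_Icc_self)
    · exact (continuous_pow _).continuousOn
    · intro x hx; exact pow_ne_zero _ (ne_of_gt hx.1)
  · intro x hx
    rcases eq_or_lt_of_le hx.1 with h0 | h0
    · rw [← h0]; simpa [hφ] using hLnonneg
    · rw [hφeq ⟨h0, hx.2⟩]; exact hgnonneg x ⟨h0, hx.2⟩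
  · exact hgd0
  · -- limit of x^(m+1) * gd x
    refine ⟨f'' 0 - ((m:ℝ) + 1) * f'' 0, ?_⟩
    have hmem : nhdsWithin (0:ℝ) (Ioi 0) ≤ nhdsWithin 0 (Icc 0 1 \ {0}) := by
      rw [← nhdsWithin_Ioc_eq_nhdsGT (by norm_num : (0:ℝ) < 1)]
      apply nhdsWithin_mono
      intro y hy
      exact ⟨Ioc_subset_Icc_self hy, ne_of_gt hy.1⟩
    have hslope : Filter.Tendsto (fun x => f' x / x) (nhdsWithin 0 (Ioi 0)) (nhds (f'' 0)) := by
      have := (hasDerivWithinAt_iff_tendsto_slope.mp (hf'' 0 h01))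
      have h2 : Filter.Tendsto (slope f' 0) (nhdsWithin 0 (Set.Ioi 0)) (nhds (f'' 0)) :=
        this.mono_left hmem
      apply h2.congr'
      filter_upwards [self_mem_nhdsWithin] with y hy
      simp [slope_def_field, hf'0]
    have hf''t : Filter.Tendsto f'' (nhdsWithin 0 (Ioi 0)) (nhds (f'' 0)) := by
      apply (hc 0 h01).mono_left
      rw [← nhdsWithin_Ioc_eq_nhdsGT (by norm_num : (0:ℝ) < 1)]
      exact nhdsWithin_mono _ Ioc_subset_Icc_self
    have := hf''t.sub ((hslope.const_mul ((m:ℝ) + 1)))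
    apply this.congr'
    filter_upwards [self_mem_nhdsWithin] with y hy
    have hy0 : y ≠ 0 := ne_of_gt (Set.mem_Ioi.mp hy)
    show f'' y - ((m:ℝ) + 1) * (f' y / y) = y ^ (m + 2 - 1) * gd y
    have : m + 2 - 1 = m + 1 := rfl
    rw [this, hgd]
    field_simp
    ring
  · -- integral identity
    intro x hx
    have hint : ∫ t in (0:ℝ)..x, t ^ (m + 2 - 1) * φ t = ∫ t in (0:ℝ)..x, f' t := by
      apply intervalIntegral.integral_congr
      intro t ht
      rw [uIcc_of_le hx.1] at ht
      rcases eq_or_lt_of_le ht.1 with h0 | h0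
      · rw [← h0]
        show (0:ℝ) ^ (m + 2 - 1) * φ 0 = f' 0
        simp [hf'0]
      · have hφt : φ t = g t := hφeq ⟨h0, ht.2.trans hx.2⟩
        show t ^ (m + 2 - 1) * φ t = f' t
        rw [hφt, hg]
        show t ^ (m + 1) * (f' t / t ^ (m + 1)) = f' t
        field_simp
    rw [hint]
    have : ∫ t in (0:ℝ)..x, f' t = f x - f 0 := by
      apply intervalIntegral.integral_eq_sub_of_hasDeriv_right_of_le hx.1
      · have hfc : ContinuousOn f (Set.Icc 0 1) := fun y hy => (hf' y hy).continuousWithinAt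
        exact hfc.mono (Set.Icc_subset_Icc le_rfl hx.2)
      · intro y hy
        have hyIcc : y ∈ Icc (0:ℝ) 1 := ⟨hy.1.le, hy.2.le.trans hx.2⟩
        have : HasDerivAt f (f' y) y := by
          apply (hf' y hyIcc).hasDerivAt
          apply Icc_mem_nhds
          · exact hy.1
          · exact lt_of_lt_of_le hy.2 hx.2
        exact this.hasDerivWithinAt
      · exact (hf'c.mono (Icc_subset_Icc le_rfl hx.2)).intervalIntegrable_of_Icc hx.1
    rw [this]; ring
end

section
/- Let j ≥ 2, let φ ∈ C¹[0,1] with φ(x) ≥ 0 and φ'(x) ≥ 0 on [0,1], and define f(x) = ∫_0^x t^{j−1} φ(t) dt. Then f ≤ B_{n,j} f ≤ B_n f pointwise on [0,1] for all n ≥ j. -/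
open Set Finset

lemma binom_sum (N : ℕ) (x : ℝ) :
    ∑ k ∈ Finset.range (N+1), (N.choose k : ℝ) * x ^ k * (1-x) ^ (N-k) = 1 := by
  have h := add_pow x (1 - x) N
  have hx : x + (1 - x) = 1 := by ring
  rw [hx, one_pow] at h
  conv_rhs => rw [h]
  exact Finset.sum_congr rfl fun k _ => by ring

lemma desc_choose {j k n : ℕ} (hjk : j ≤ k) (hkn : k ≤ n) :
    k.descFactorial j * n.choose k = n.descFactorial j * (n-j).choose (k-j) := by
  apply Nat.eq_of_mul_eq_mul_right (Nat.mul_pos (Nat.factorial_pos (k-j)) (Nat.factorial_pos (n-k)))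
  have L : k.descFactorial j * n.choose k * ((k - j).factorial * (n - k).factorial) = n.factorial := by
    rw [← Nat.choose_mul_factorial_mul_factorial hkn, ← Nat.factorial_mul_descFactorial hjk]
    ring
  have R : n.descFactorial j * (n-j).choose (k-j) * ((k - j).factorial * (n - k).factorial) = n.factorial := by
    have hnk : n - k = (n - j) - (k - j) := by omega
    rw [← Nat.factorial_mul_descFactorial (le_trans hjk hkn), hnk,
      ← Nat.choose_mul_factorial_mul_factorial (by omega : k - j ≤ n - j)]
    ring
  rw [L, R]

lemma desc_cast {j k : ℕ} (h : j ≤ k) :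
    (∏ i ∈ Finset.range j, ((k : ℝ) - i)) = (k.descFactorial j : ℝ) := by
  rw [Nat.descFactorial_eq_prod_range, Nat.cast_prod]
  refine Finset.prod_congr rfl fun i hi => ?_
  rw [Nat.cast_sub (le_trans (le_of_lt (Finset.mem_range.mp hi)) h)]

lemma falling_moment (n j : ℕ) (hn : j ≤ n) (x : ℝ) :
    ∑ k ∈ Finset.range (n+1), (∏ i ∈ Finset.range j, ((k:ℝ) - i)) * bp n k x
      = (n.descFactorial j : ℝ) * x ^ j := by
  rw [← Finset.sum_range_add_sum_Ico _ (by omega : j ≤ n+1)]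
  have h0 : ∑ k ∈ Finset.range j, (∏ i ∈ Finset.range j, ((k:ℝ) - i)) * bp n k x = 0 := by
    refine Finset.sum_eq_zero fun k hk => ?_
    rw [Finset.prod_eq_zero hk (by simp), zero_mul]
  rw [h0, zero_add, Finset.sum_Ico_eq_sum_range]
  have hrw : ∀ m ∈ Finset.range (n + 1 - j),
      (∏ i ∈ Finset.range j, (((j + m : ℕ):ℝ) - i)) * bp n (j + m) x
      = (n.descFactorial j : ℝ) * ((n-j).choose m : ℝ) * (x ^ m * (1-x)^((n-j)-m)) * x ^ j := by
    intro m hm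
    have hm' : m ≤ n - j := by have := Finset.mem_range.mp hm; omega
    have hkn : j + m ≤ n := by omega
    rw [desc_cast (Nat.le_add_right j m)]
    show ((j+m).descFactorial j : ℝ) * ((n.choose (j+m) : ℝ) * x ^ (j+m) * (1-x)^(n-(j+m))) = _
    have key : ((j+m).descFactorial j : ℝ) * (n.choose (j+m) : ℝ)
        = (n.descFactorial j : ℝ) * ((n-j).choose m : ℝ) := by
      have := desc_choose (Nat.le_add_right j m) hkn
      rw [Nat.add_sub_cancel_left] at this
      exact_mod_cast congrArg (Nat.cast (R := ℝ)) this
    have hexp : n - (j+m) = (n-j) - m := by omega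
    rw [hexp, pow_add]
    calc ((j+m).descFactorial j : ℝ) * ((n.choose (j+m) : ℝ) * (x^j * x^m) * (1-x)^((n-j)-m))
        = ((j+m).descFactorial j : ℝ) * (n.choose (j+m) : ℝ) * (x^m * (1-x)^((n-j)-m)) * x^j := by ring
      _ = _ := by rw [key]
  rw [Finset.sum_congr rfl hrw]
  have hNj : n + 1 - j = (n - j) + 1 := by omega
  rw [← Finset.sum_mul]
  have : ∑ m ∈ Finset.range (n+1-j), (n.descFactorial j : ℝ) * ((n-j).choose m : ℝ) * (x ^ m * (1-x)^((n-j)-m))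
      = (n.descFactorial j : ℝ) * ∑ m ∈ Finset.range ((n-j)+1), ((n-j).choose m : ℝ) * x ^ m * (1-x)^((n-j)-m) := by
    rw [hNj, Finset.mul_sum]
    exact Finset.sum_congr rfl fun m _ => by ring
  rw [this, binom_sum, mul_one]

theorem stmt9 (j n : ℕ) (hj : 2 ≤ j) (hn : j ≤ n) (φ φ' : ℝ → ℝ)
    (hφ' : ∀ x ∈ Icc (0:ℝ) 1, HasDerivWithinAt φ (φ' x) (Icc 0 1) x)
    (hφ'c : ContinuousOn φ' (Icc 0 1))
    (hφ0 : ∀ x ∈ Icc (0:ℝ) 1, 0 ≤ φ x)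
    (hφ'0 : ∀ x ∈ Icc (0:ℝ) 1, 0 ≤ φ' x)
    (f : ℝ → ℝ) (hf : f = fun u => ∫ t in (0:ℝ)..u, t ^ (j - 1) * φ t) :
    ∀ x ∈ Icc (0:ℝ) 1, f x ≤ akr n j f x ∧ akr n j f x ≤ bern n f x := by
  -- basic positivity facts
  have hj0 : (j:ℝ) ≠ 0 := by positivity
  have hn0 : 0 < n := by omega
  set c : ℝ := (j:ℝ)⁻¹ with hc
  have hc0 : 0 < c := by positivity
  -- the clamp
  have hclamp_mem : ∀ t : ℝ, max 0 (min 1 t) ∈ Icc (0:ℝ) 1 := by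
    intro t
    constructor
    · exact le_max_left _ _
    · exact max_le zero_le_one (min_le_left _ _)
  have hclamp_id : ∀ t ∈ Icc (0:ℝ) 1, max 0 (min 1 t) = t := by
    intro t ht
    rw [min_eq_right ht.2, max_eq_right ht.1]
  set φc : ℝ → ℝ := fun t => φ (max 0 (min 1 t)) with hφcdef
  have hφcont : ContinuousOn φ (Icc 0 1) :=
    fun y hy => ((hφ' y hy).differentiableWithinAt).continuousWithinAt
  have hφc_cont : Continuous φc := by
    apply hφcont.comp_continuous
    · exact continuous_const.max (continuous_const.min continuous_id)
    · exact hclamp_mem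
  have hφc_nonneg : ∀ t : ℝ, 0 ≤ φc t := fun t => hφ0 _ (hclamp_mem t)
  have hφmono : MonotoneOn φ (Icc 0 1) :=
    monotoneOn_of_hasDerivWithinAt_nonneg (convex_Icc 0 1) hφcont
      (fun x hx => (hφ' x (interior_subset hx)).mono interior_subset)
      (fun x hx => hφ'0 x (interior_subset hx))
  -- the extended function F
  set h : ℝ → ℝ := fun t => t ^ (j-1) * φc t with hhdef
  have hh : Continuous h := (continuous_pow (j-1)).mul hφc_cont
  set F : ℝ → ℝ := fun u => ∫ t in (0:ℝ)..u, h t with hFdef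
  have hF : ∀ b : ℝ, HasDerivAt F (h b) b :=
    fun b => (hh.integral_hasStrictDerivAt 0 b).hasDerivAt
  have hFc : Continuous F := by
    apply continuous_iff_continuousAt.mpr
    exact fun b => (hF b).continuousAt
  have hFf : ∀ u ∈ Icc (0:ℝ) 1, F u = f u := by
    intro u hu
    rw [hf]
    apply intervalIntegral.integral_congr
    intro t ht
    rw [uIcc_of_le hu.1] at ht
    have ht' : t ∈ Icc (0:ℝ) 1 := ⟨ht.1, le_trans ht.2 hu.2⟩
    show t ^ (j-1) * φc t = t ^ (j-1) * φ t
    rw [hφcdef]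
    simp only [hclamp_id t ht']
  -- f is monotone on [0,1]
  have hfmono : ∀ u ∈ Icc (0:ℝ) 1, ∀ v ∈ Icc (0:ℝ) 1, u ≤ v → f u ≤ f v := by
    intro u hu v hv huv
    rw [← hFf u hu, ← hFf v hv]
    have hadd : (∫ t in (0:ℝ)..u, h t) + ∫ t in u..v, h t = ∫ t in (0:ℝ)..v, h t :=
      intervalIntegral.integral_add_adjacent_intervals (hh.intervalIntegrable 0 u)
        (hh.intervalIntegrable u v)
    have hpos : 0 ≤ ∫ t in u..v, h t := by
      apply intervalIntegral.integral_nonneg huv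
      intro t ht
      exact mul_nonneg (pow_nonneg (le_trans hu.1 ht.1) _) (hφc_nonneg t)
    show (∫ t in (0:ℝ)..u, h t) ≤ ∫ t in (0:ℝ)..v, h t
    linarith
  -- g and its convexity
  set g : ℝ → ℝ := fun y => F (y ^ c) with hgdef
  have hrpow_cont : Continuous fun y : ℝ => y ^ c := Real.continuous_rpow_const hc0.le
  have hrpow_mem : ∀ y ∈ Icc (0:ℝ) 1, y ^ c ∈ Icc (0:ℝ) 1 := by
    intro y hy
    exact ⟨Real.rpow_nonneg hy.1 c, Real.rpow_le_one hy.1 hy.2 hc0.le⟩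
  have hgderiv : ∀ y ∈ Ioo (0:ℝ) 1, HasDerivAt g (c * φc (y ^ c)) y := by
    intro y hy
    have hy0 : (0:ℝ) < y := hy.1
    have hdy : HasDerivAt (fun y : ℝ => y ^ c) (c * y ^ (c - 1)) y :=
      Real.hasDerivAt_rpow_const (Or.inl hy0.ne')
    have hcomp : HasDerivAt g (h (y ^ c) * (c * y ^ (c - 1))) y := by have := (hF (y ^ c)).comp y hdy; exact this
    have hval : h (y ^ c) * (c * y ^ (c - 1)) = c * φc (y ^ c) := by
      show (y ^ c) ^ (j-1) * φc (y ^ c) * (c * y ^ (c - 1)) = c * φc (y ^ c)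
      have h1 : ((y ^ c) : ℝ) ^ (j-1) = y ^ (c * ((j:ℝ) - 1)) := by
        rw [← Real.rpow_natCast (y ^ c) (j-1), ← Real.rpow_mul hy0.le,
          Nat.cast_sub (by omega : 1 ≤ j), Nat.cast_one]
      have h2 : y ^ (c * ((j:ℝ) - 1)) * y ^ (c - 1) = 1 := by
        rw [← Real.rpow_add hy0]
        have he : c * ((j:ℝ) - 1) + (c - 1) = 0 := by
          have : c * (j:ℝ) = 1 := inv_mul_cancel₀ hj0
          linear_combination this
        rw [he, Real.rpow_zero]
      calc (y ^ c) ^ (j-1) * φc (y ^ c) * (c * y ^ (c - 1))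
          = (y ^ (c * ((j:ℝ) - 1)) * y ^ (c - 1)) * (c * φc (y ^ c)) := by rw [h1]; ring
        _ = c * φc (y ^ c) := by rw [h2, one_mul]
    rw [← hval]
    exact hcomp
  have hgconv : ConvexOn ℝ (Icc (0:ℝ) 1) g := by
    apply MonotoneOn.convexOn_of_deriv (convex_Icc 0 1)
    · exact hFc.comp_continuousOn hrpow_cont.continuousOn
    · rw [interior_Icc]
      exact fun y hy => ((hgderiv y hy).differentiableAt).differentiableWithinAt
    · rw [interior_Icc]
      intro y₁ h₁ y₂ h₂ h12
      rw [(hgderiv y₁ h₁).deriv, (hgderiv y₂ h₂).deriv]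
      apply mul_le_mul_of_nonneg_left _ hc0.le
      have m1 := hrpow_mem y₁ ⟨h₁.1.le, h₁.2.le⟩
      have m2 := hrpow_mem y₂ ⟨h₂.1.le, h₂.2.le⟩
      show φ (max 0 (min 1 (y₁ ^ c))) ≤ φ (max 0 (min 1 (y₂ ^ c)))
      rw [hclamp_id _ m1, hclamp_id _ m2]
      exact hφmono m1 m2 (Real.rpow_le_rpow h₁.1.le h12 hc0.le)
  -- node facts
  intro x hx
  have hx0 := hx.1
  have hx1 := hx.2
  have hbp0 : ∀ k, 0 ≤ bp n k x := by
    intro k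
    exact mul_nonneg (mul_nonneg (Nat.cast_nonneg _) (pow_nonneg hx0 _))
      (pow_nonneg (by linarith) _)
  set D : ℝ := ∏ i ∈ Finset.range j, ((n : ℝ) - i) with hD
  have hDpos : 0 < D := by
    apply Finset.prod_pos
    intro i hi
    have : i < n := lt_of_lt_of_le (Finset.mem_range.mp hi) hn
    have : (i:ℝ) < n := by exact_mod_cast this
    linarith
  set a : ℕ → ℝ := fun k => (∏ i ∈ Finset.range j, ((k : ℝ) - i)) / D with ha
  have hnum_nonneg : ∀ k : ℕ, 0 ≤ ∏ i ∈ Finset.range j, ((k : ℝ) - i) := by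
    intro k
    by_cases hk : k < j
    · rw [Finset.prod_eq_zero (Finset.mem_range.mpr hk) (by simp)]
    · apply Finset.prod_nonneg
      intro i hi
      have : i ≤ k := by have := Finset.mem_range.mp hi; omega
      have : (i:ℝ) ≤ k := by exact_mod_cast this
      linarith
  have ha_nonneg : ∀ k : ℕ, 0 ≤ a k := fun k => div_nonneg (hnum_nonneg k) hDpos.le
  have ha_le : ∀ k ≤ n, a k ≤ ((k:ℝ)/n) ^ j := by
    intro k hk
    by_cases hkj : k < j
    · rw [ha]
      simp only
      rw [Finset.prod_eq_zero (Finset.mem_range.mpr hkj) (by simp), zero_div]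
      positivity
    · push_neg at hkj
      show (∏ i ∈ Finset.range j, ((k:ℝ) - i)) / D ≤ ((k:ℝ)/n) ^ j
      have e1 : (∏ i ∈ Finset.range j, ((k:ℝ) - i)) / D
          = ∏ i ∈ Finset.range j, (((k:ℝ) - i) / ((n:ℝ) - i)) := by
        rw [hD, ← Finset.prod_div_distrib]
      have e2 : ((k:ℝ)/n) ^ j = ∏ _i ∈ Finset.range j, (k:ℝ)/n := by
        rw [Finset.prod_const, Finset.card_range]
      rw [e1, e2]
      apply Finset.prod_le_prod
      · intro i hi
        have hik : i ≤ k := by have := Finset.mem_range.mp hi; omega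
        have hin : i < n := by have := Finset.mem_range.mp hi; omega
        have hik' : (i:ℝ) ≤ k := by exact_mod_cast hik
        have hin' : (i:ℝ) < n := by exact_mod_cast hin
        exact div_nonneg (by linarith) (by linarith)
      · intro i hi
        have hin : i < n := by have := Finset.mem_range.mp hi; omega
        have hin' : (i:ℝ) < n := by exact_mod_cast hin
        have hkn' : (k:ℝ) ≤ n := by exact_mod_cast hk
        have hi0 : (0:ℝ) ≤ i := Nat.cast_nonneg i
        have hnpos : (0:ℝ) < n := by exact_mod_cast hn0
        rw [div_le_div_iff₀ (by linarith) hnpos]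
        nlinarith
  have ha_mem : ∀ k ≤ n, a k ∈ Icc (0:ℝ) 1 := by
    intro k hk
    refine ⟨ha_nonneg k, le_trans (ha_le k hk) ?_⟩
    apply pow_le_one₀ (div_nonneg (Nat.cast_nonneg k) (Nat.cast_nonneg n))
    rw [div_le_one (by exact_mod_cast hn0)]
    exact_mod_cast hk
  have hnode_eq : ∀ k : ℕ, akrNode n j k = a k ^ c := fun k => rfl
  have hnode_mem : ∀ k ≤ n, akrNode n j k ∈ Icc (0:ℝ) 1 := by
    intro k hk
    rw [hnode_eq k]
    exact hrpow_mem (a k) (ha_mem k hk)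
  have hpow_c : ∀ z : ℝ, 0 ≤ z → (z ^ j) ^ c = z := by
    intro z hz
    rw [← Real.rpow_natCast z j, ← Real.rpow_mul hz, mul_inv_cancel₀ hj0, Real.rpow_one]
  have hnode_le : ∀ k ≤ n, akrNode n j k ≤ (k:ℝ)/n := by
    intro k hk
    rw [hnode_eq k]
    calc (a k) ^ c ≤ (((k:ℝ)/n) ^ j) ^ c :=
          Real.rpow_le_rpow (ha_nonneg k) (ha_le k hk) hc0.le
      _ = (k:ℝ)/n := hpow_c _ (div_nonneg (Nat.cast_nonneg k) (Nat.cast_nonneg n))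
  have hkn_mem : ∀ k ≤ n, (k:ℝ)/n ∈ Icc (0:ℝ) 1 := by
    intro k hk
    refine ⟨div_nonneg (Nat.cast_nonneg k) (Nat.cast_nonneg n), ?_⟩
    rw [div_le_one (by exact_mod_cast hn0)]
    exact_mod_cast hk
  constructor
  · -- f x ≤ akr
    have hw : ∀ k ∈ Finset.range (n+1), (0:ℝ) ≤ bp n k x := fun k _ => hbp0 k
    have hw1 : ∑ k ∈ Finset.range (n+1), bp n k x = 1 := by
      simp only [bp]
      exact binom_sum n x
    have hmem : ∀ k ∈ Finset.range (n+1), a k ∈ Icc (0:ℝ) 1 := by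
      intro k hk
      exact ha_mem k (by have := Finset.mem_range.mp hk; omega)
    have hJ := hgconv.map_sum_le hw hw1 hmem
    have hDne : (↑(n.descFactorial j) : ℝ) ≠ 0 := by
      have := hDpos
      rw [hD, desc_cast hn] at this
      exact this.ne'
    have hcen : ∑ k ∈ Finset.range (n+1), bp n k x • a k = x ^ j := by
      have e : ∑ k ∈ Finset.range (n+1), bp n k x • a k
          = (∑ k ∈ Finset.range (n+1), (∏ i ∈ Finset.range j, ((k:ℝ) - i)) * bp n k x) / D := by
        rw [Finset.sum_div]
        refine Finset.sum_congr rfl fun k _ => ?_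
        rw [smul_eq_mul, ha]
        ring
      rw [e, falling_moment n j hn x, hD, desc_cast hn, mul_comm, mul_div_assoc,
        div_self hDne, mul_one]
    rw [hcen] at hJ
    have hgx : g (x ^ j) = f x := by
      show F ((x ^ j) ^ c) = f x
      rw [hpow_c x hx0]
      exact hFf x hx
    have hRHS : ∑ k ∈ Finset.range (n+1), bp n k x • g (a k) = akr n j f x := by
      unfold akr
      refine Finset.sum_congr rfl fun k hk => ?_
      have hk' : k ≤ n := by have := Finset.mem_range.mp hk; omega
      rw [smul_eq_mul]
      have e : g (a k) = f (akrNode n j k) := by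
        show F (a k ^ c) = f (akrNode n j k)
        rw [← hnode_eq k]
        exact hFf _ (hnode_mem k hk')
      rw [e, mul_comm]
    rw [hgx, hRHS] at hJ
    exact hJ
  · -- akr ≤ bern
    unfold akr bern
    apply Finset.sum_le_sum
    intro k hk
    have hk' : k ≤ n := by have := Finset.mem_range.mp hk; omega
    exact mul_le_mul_of_nonneg_right
      (hfmono _ (hnode_mem k hk') _ (hkn_mem k hk') (hnode_le k hk')) (hbp0 k)
end

section
/- Let (f_0, f_1) be a Haar pair on [a,b] (f_0 strictly positive continuous, f_1/f_0 strictly increasing continuous) and let I = (f_1/f_0)([a,b]). Then a continuous f : [a,b] → ℝ is (f_0,f_1)-convex if and only if the function (f/f_0) ∘ (f_1/f_0)^{-1} is convex on I in the standard sense. -/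
open Set Finset

theorem stmt12 (a b : ℝ) (hab : a < b) (f0 f1 f h : ℝ → ℝ)
    (hf0c : ContinuousOn f0 (Icc a b))
    (hf0pos : ∀ x ∈ Icc a b, 0 < f0 x)
    (hf1c : ContinuousOn f1 (Icc a b))
    (hmono : StrictMonoOn (fun x => f1 x / f0 x) (Icc a b))
    (hfc : ContinuousOn f (Icc a b))
    (hinv : ∀ x ∈ Icc a b, h (f1 x / f0 x) = x) :
    (∀ x0 ∈ Icc a b, ∀ x1 ∈ Icc a b, ∀ x2 ∈ Icc a b, x0 < x1 → x1 < x2 →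
        0 ≤ Matrix.det
          !![f0 x0, f0 x1, f0 x2; f1 x0, f1 x1, f1 x2; f x0, f x1, f x2]) ↔
      ConvexOn ℝ ((fun x => f1 x / f0 x) '' Icc a b)
        (fun t => f (h t) / f0 (h t)) := by
  set φ : ℝ → ℝ := fun x => f1 x / f0 x with hφ
  have hφc : ContinuousOn φ (Icc a b) :=
    hf1c.div hf0c fun x hx => (hf0pos x hx).ne'
  have hconv : Convex ℝ (φ '' Icc a b) :=
    IsPreconnected.convex ((isPreconnected_Icc).image φ hφc)
  -- key equivalence at three points
  have key : ∀ x0 ∈ Icc a b, ∀ x1 ∈ Icc a b, ∀ x2 ∈ Icc a b, x0 < x1 → x1 < x2 →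
      (0 ≤ Matrix.det
          !![f0 x0, f0 x1, f0 x2; f1 x0, f1 x1, f1 x2; f x0, f x1, f x2] ↔
        (f x1 / f0 x1 - f x0 / f0 x0) / (φ x1 - φ x0) ≤
          (f x2 / f0 x2 - f x1 / f0 x1) / (φ x2 - φ x1)) := by
    intro x0 hx0 x1 hx1 x2 hx2 h01 h12
    have p0 := hf0pos x0 hx0
    have p1 := hf0pos x1 hx1
    have p2 := hf0pos x2 hx2
    have t01 : φ x0 < φ x1 := hmono hx0 hx1 h01
    have t12 : φ x1 < φ x2 := hmono hx1 hx2 h12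
    have hdet : Matrix.det
        !![f0 x0, f0 x1, f0 x2; f1 x0, f1 x1, f1 x2; f x0, f x1, f x2] =
        (f0 x0 * f0 x1 * f0 x2) *
          ((φ x2 - φ x1) * (f x0 / f0 x0 - f x1 / f0 x1) +
           (φ x1 - φ x0) * (f x2 / f0 x2 - f x1 / f0 x1)) := by
      rw [Matrix.det_fin_three]
      simp only [hφ, Matrix.of_apply, Matrix.cons_val', Matrix.cons_val_zero, Matrix.cons_val_one,
        Matrix.head_cons, Matrix.empty_val', Matrix.cons_val_fin_one, Matrix.head_fin_const,
        Matrix.cons_val_two, Matrix.tail_cons]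
      field_simp
      ring
    rw [hdet, div_le_div_iff₀ (by linarith) (by linarith)]
    constructor
    · intro hd
      have hE : 0 ≤ (φ x2 - φ x1) * (f x0 / f0 x0 - f x1 / f0 x1) +
          (φ x1 - φ x0) * (f x2 / f0 x2 - f x1 / f0 x1) :=
        nonneg_of_mul_nonneg_right hd (by positivity)
      nlinarith [hE]
    · intro hs
      have hE : 0 ≤ (φ x2 - φ x1) * (f x0 / f0 x0 - f x1 / f0 x1) +
          (φ x1 - φ x0) * (f x2 / f0 x2 - f x1 / f0 x1) := by nlinarith
      positivity
  constructor
  · intro hd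
    rw [convexOn_iff_slope_mono_adjacent]
    refine ⟨hconv, ?_⟩
    intro t0 t1 t2 ht0 ht2 h01 h12
    have ht1 : t1 ∈ φ '' Icc a b :=
      hconv.ordConnected.out ht0 ht2 ⟨h01.le, h12.le⟩
    obtain ⟨x0, hx0, hφ0⟩ := ht0
    obtain ⟨x1, hx1, hφ1⟩ := ht1
    obtain ⟨x2, hx2, hφ2⟩ := ht2
    have e0 : h t0 = x0 := by rw [← hφ0]; exact hinv x0 hx0
    have e1 : h t1 = x1 := by rw [← hφ1]; exact hinv x1 hx1
    have e2 : h t2 = x2 := by rw [← hφ2]; exact hinv x2 hx2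
    have o01 : x0 < x1 := by
      rw [← hmono.lt_iff_lt hx0 hx1]; rw [hφ0, hφ1]; exact h01
    have o12 : x1 < x2 := by
      rw [← hmono.lt_iff_lt hx1 hx2]; rw [hφ1, hφ2]; exact h12
    have := (key x0 hx0 x1 hx1 x2 hx2 o01 o12).mp
      (hd x0 hx0 x1 hx1 x2 hx2 o01 o12)
    simpa [e0, e1, e2, hφ0, hφ1, hφ2] using this
  · intro hc x0 hx0 x1 hx1 x2 hx2 o01 o12
    have m0 : φ x0 ∈ φ '' Icc a b := mem_image_of_mem φ hx0
    have m2 : φ x2 ∈ φ '' Icc a b := mem_image_of_mem φ hx2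
    have t01 : φ x0 < φ x1 := hmono hx0 hx1 o01
    have t12 : φ x1 < φ x2 := hmono hx1 hx2 o12
    have hs := hc.slope_mono_adjacent m0 m2 t01 t12
    rw [key x0 hx0 x1 hx1 x2 hx2 o01 o12]
    have e0 := hinv x0 hx0
    have e1 := hinv x1 hx1
    have e2 := hinv x2 hx2
    simpa [hφ, e0, e1, e2] using hs
end

section
/- Let 𝓑_n be a Bernstein-type operator 𝓑_n f(x) = Σ_{k=0}^n f(t_{n,k}) α_{n,k} p_{n,k}(x) on C[a,b] with α_{n,k} > 0 and nodes t_{n,k} ∈ [a,b], and suppose 𝓑_n fixes both functions f_0 and f_1 of a Haar pair (f_0, f_1). Then for every (f_0,f_1)-convex continuous function f on [a,b], 𝓑_n f ≥ f pointwise. -/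
open Set Finset

theorem stmt13 (a b : ℝ) (hab : a < b) (n : ℕ) (t α : ℕ → ℝ)
    (ht : ∀ k ≤ n, t k ∈ Icc a b) (hα : ∀ k ≤ n, 0 < α k)
    (f0 f1 : ℝ → ℝ)
    (hf0pos : ∀ x ∈ Icc a b, 0 < f0 x)
    (hmono : StrictMonoOn (fun x => f1 x / f0 x) (Icc a b))
    (B : (ℝ → ℝ) → ℝ → ℝ)
    (hB : ∀ g x, B g x = ∑ k ∈ Finset.range (n + 1),
      g (t k) * α k * ((n.choose k : ℝ) * ((x - a) / (b - a)) ^ k *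
        ((b - x) / (b - a)) ^ (n - k)))
    (hfix0 : ∀ x ∈ Icc a b, B f0 x = f0 x)
    (hfix1 : ∀ x ∈ Icc a b, B f1 x = f1 x)
    (f : ℝ → ℝ) (hfc : ContinuousOn f (Icc a b))
    (hconv : ∀ x0 ∈ Icc a b, ∀ x1 ∈ Icc a b, ∀ x2 ∈ Icc a b, x0 < x1 → x1 < x2 →
      0 ≤ Matrix.det
        !![f0 x0, f0 x1, f0 x2; f1 x0, f1 x1, f1 x2; f x0, f x1, f x2]) :
    ∀ x ∈ Icc a b, f x ≤ B f x := by
  have hba : (0:ℝ) < b - a := sub_pos.mpr hab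
  set g : ℝ → ℝ := fun y => f1 y / f0 y with hg
  set h : ℝ → ℝ := fun y => f y / f0 y with hhdef
  -- the key slope inequality from generalized convexity
  have slope_le : ∀ x ∈ Icc a b, ∀ y ∈ Icc a b, ∀ z ∈ Icc a b, y < x → x < z →
      (h x - h y) / (g x - g y) ≤ (h z - h x) / (g z - g x) := by
    intro x hxI y hy z hz hyx hxz
    have hgy : g y < g x := hmono hy hxI hyx
    have hgz : g x < g z := hmono hxI hz hxz
    have h0y := hf0pos y hy
    have h0x := hf0pos x hxI
    have h0z := hf0pos z hz
    have hd := hconv y hy x hxI z hz hyx hxz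
    simp [Matrix.det_fin_three] at hd
    rw [div_le_div_iff₀ (by linarith) (by linarith), ← sub_nonpos]
    have e : (h x - h y) * (g z - g x) - (h z - h x) * (g x - g y)
        = -(f0 y * (f1 x * f z - f1 z * f x) - f0 x * (f1 y * f z - f1 z * f y)
            + f0 z * (f1 y * f x - f1 x * f y)) / (f0 y * f0 x * f0 z) := by
      simp only [hg, hhdef]
      field_simp
      ring
    rw [e]
    apply div_nonpos_of_nonpos_of_nonneg
    · linarith
    · positivity
  -- the main claim on the open interval
  have key : ∀ x ∈ Ioo a b, f x ≤ B f x := by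
    intro x hx
    obtain ⟨hax, hxb⟩ := hx
    have hxI : x ∈ Icc a b := ⟨hax.le, hxb.le⟩
    set L : Set ℝ := (fun y => (h x - h y) / (g x - g y)) '' (Ico a x) with hL
    have hLne : L.Nonempty := ⟨_, ⟨a, ⟨le_refl a, hax⟩, rfl⟩⟩
    have hmemI : ∀ y ∈ Ico a x, y ∈ Icc a b := fun y hy => ⟨hy.1, hy.2.le.trans hxb.le⟩
    have hLub : ∀ z ∈ Icc a b, x < z → ∀ s ∈ L, s ≤ (h z - h x) / (g z - g x) := by
      rintro z hz hxz s ⟨y, hy, rfl⟩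
      exact slope_le x hxI y (hmemI y hy) z hz hy.2 hxz
    have hLbdd : BddAbove L :=
      ⟨(h b - h x) / (g b - g x), fun s hs =>
        hLub b ⟨hab.le, le_refl b⟩ hxb s hs⟩
    set m : ℝ := sSup L with hm
    -- support line: (h x - m * g x) * f0 y + m * f1 y ≤ f y on [a,b]
    have support : ∀ y ∈ Icc a b, (h x - m * g x) * f0 y + m * f1 y ≤ f y := by
      intro y hy
      have h0y := hf0pos y hy
      have e1 : h y * f0 y = f y := div_mul_cancel₀ _ h0y.ne'
      have e2 : g y * f0 y = f1 y := div_mul_cancel₀ _ h0y.ne'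
      rcases lt_trichotomy y x with hyx | hyx | hyx
      · have hgy : g y < g x := hmono hy hxI hyx
        have hle : (h x - h y) / (g x - g y) ≤ m :=
          le_csSup hLbdd ⟨y, ⟨hy.1, hyx⟩, rfl⟩
        have hle' : h x - h y ≤ m * (g x - g y) := by
          rwa [div_le_iff₀ (by linarith)] at hle
        have key' : h x - m * g x + m * g y ≤ h y := by linarith [hle']
        calc (h x - m * g x) * f0 y + m * f1 y
            = (h x - m * g x + m * g y) * f0 y := by rw [← e2]; ring
          _ ≤ h y * f0 y := mul_le_mul_of_nonneg_right key' h0y.le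
          _ = f y := e1
      · subst hyx
        have : (h y - m * g y) * f0 y + m * f1 y = f y := by
          rw [← e1, ← e2]; ring
        linarith [this.le]
      · have hgy : g x < g y := hmono hxI hy hyx
        have hle : m ≤ (h y - h x) / (g y - g x) :=
          csSup_le hLne (hLub y hy hyx)
        have hle' : m * (g y - g x) ≤ h y - h x := by
          rwa [le_div_iff₀ (by linarith)] at hle
        have key' : h x - m * g x + m * g y ≤ h y := by linarith [hle']
        calc (h x - m * g x) * f0 y + m * f1 y
            = (h x - m * g x + m * g y) * f0 y := by rw [← e2]; ring
          _ ≤ h y * f0 y := mul_le_mul_of_nonneg_right key' h0y.le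
          _ = f y := e1
    -- put the pieces together
    have hBf0 := hfix0 x hxI
    have hBf1 := hfix1 x hxI
    rw [hB] at hBf0 hBf1
    have h0x := hf0pos x hxI
    have ex1 : h x * f0 x = f x := div_mul_cancel₀ _ h0x.ne'
    have ex2 : g x * f0 x = f1 x := div_mul_cancel₀ _ h0x.ne'
    have hPnn : ∀ k, 0 ≤ (n.choose k : ℝ) * ((x - a) / (b - a)) ^ k *
        ((b - x) / (b - a)) ^ (n - k) := by
      intro k
      apply mul_nonneg (mul_nonneg (Nat.cast_nonneg _) _) _
      · exact pow_nonneg (div_nonneg (by linarith) hba.le) _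
      · exact pow_nonneg (div_nonneg (by linarith) hba.le) _
    calc f x = (h x - m * g x) * f0 x + m * f1 x := by
            rw [← ex1, ← ex2]; ring
      _ = (h x - m * g x) * (∑ k ∈ Finset.range (n + 1),
            f0 (t k) * α k * ((n.choose k : ℝ) * ((x - a) / (b - a)) ^ k *
              ((b - x) / (b - a)) ^ (n - k)))
          + m * (∑ k ∈ Finset.range (n + 1),
            f1 (t k) * α k * ((n.choose k : ℝ) * ((x - a) / (b - a)) ^ k *
              ((b - x) / (b - a)) ^ (n - k))) := by rw [hBf0, hBf1]
      _ = ∑ k ∈ Finset.range (n + 1),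
            ((h x - m * g x) * f0 (t k) + m * f1 (t k)) * α k *
              ((n.choose k : ℝ) * ((x - a) / (b - a)) ^ k *
                ((b - x) / (b - a)) ^ (n - k)) := by
            rw [Finset.mul_sum, Finset.mul_sum, ← Finset.sum_add_distrib]
            exact Finset.sum_congr rfl fun k _ => by ring
      _ ≤ ∑ k ∈ Finset.range (n + 1),
            f (t k) * α k * ((n.choose k : ℝ) * ((x - a) / (b - a)) ^ k *
              ((b - x) / (b - a)) ^ (n - k)) := by
            apply Finset.sum_le_sum
            intro k hk
            have hkn : k ≤ n := Nat.lt_succ_iff.mp (Finset.mem_range.mp hk)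
            exact mul_le_mul_of_nonneg_right
              (mul_le_mul_of_nonneg_right (support (t k) (ht k hkn)) (hα k hkn).le)
              (hPnn k)
      _ = B f x := (hB f x).symm
  -- extend to the closed interval by continuity
  intro x hxI
  have hcont : Continuous fun y => B f y := by
    have : (fun y => B f y) = fun y => ∑ k ∈ Finset.range (n + 1),
        f (t k) * α k * ((n.choose k : ℝ) * ((y - a) / (b - a)) ^ k *
          ((b - y) / (b - a)) ^ (n - k)) := funext (hB f)
    rw [this]
    apply continuous_finset_sum
    intro k _
    fun_prop
  have hcl : x ∈ closure (Ioo a b) := by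
    rw [closure_Ioo hab.ne]; exact hxI
  have hnb : (nhdsWithin x (Ioo a b)).NeBot :=
    mem_closure_iff_nhdsWithin_neBot.mp hcl
  exact le_of_tendsto_of_tendsto
    (((hfc x hxI).mono Ioo_subset_Icc_self : ContinuousWithinAt f (Ioo a b) x))
    ((hcont.tendsto x).mono_left nhdsWithin_le_nhds)
    (eventually_nhdsWithin_of_forall fun y hy => key y hy)
end

section
/- For all integers n ≥ j ≥ 2 and 0 ≤ k ≤ n, k/n − t_{n,k}^j ≤ (j−1)/n, where t_{n,k}^j = (k(k−1)⋯(k−j+1)/(n(n−1)⋯(n−j+1)))^{1/j}. -/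
open Set Finset

theorem stmt15 (n j k : ℕ) (hj : 2 ≤ j) (hn : j ≤ n) (hk : k ≤ n) :
    (k : ℝ) / n - akrNode n j k ≤ ((j : ℝ) - 1) / n := by
  have hn0 : (0:ℝ) < n := by
    have : 0 < n := lt_of_lt_of_le (by omega) hn
    exact_mod_cast this
  have hj0 : j ≠ 0 := by omega
  rcases lt_or_ge k j with hkj | hjk
  · have hz : (∏ i ∈ Finset.range j, ((k : ℝ) - i)) = 0 := by
      apply Finset.prod_eq_zero (Finset.mem_range.mpr hkj)
      simp
    rw [akrNode, hz, zero_div, Real.zero_rpow (by positivity), sub_zero]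
    have hkj' : (k:ℝ) ≤ (j:ℝ) - 1 := by
      have : (k:ℝ) + 1 ≤ (j:ℝ) := by exact_mod_cast hkj
      linarith
    gcongr
  · set c : ℝ := ((k:ℝ) - ((j:ℝ) - 1)) / n with hc
    have hjk' : (j:ℝ) ≤ (k:ℝ) := by exact_mod_cast hjk
    have hc0 : 0 ≤ c := by
      apply div_nonneg _ hn0.le
      linarith
    have hden0 : 0 < ∏ i ∈ Finset.range j, ((n : ℝ) - i) := by
      apply Finset.prod_pos
      intro i hi
      have : i < n := lt_of_lt_of_le (Finset.mem_range.mp hi) hn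
      have : (i:ℝ) < n := by exact_mod_cast this
      linarith
    have hkey : c ^ j * ∏ i ∈ Finset.range j, ((n : ℝ) - i)
        ≤ ∏ i ∈ Finset.range j, ((k : ℝ) - i) := by
      have := Finset.prod_mul_distrib (s := Finset.range j)
        (f := fun _ : ℕ => c) (g := fun i : ℕ => (n:ℝ) - i)
      rw [Finset.prod_const, Finset.card_range] at this
      rw [← this]
      apply Finset.prod_le_prod
      · intro i hi
        have hi' : (i:ℝ) < n := by
          exact_mod_cast lt_of_lt_of_le (Finset.mem_range.mp hi) hn
        exact mul_nonneg hc0 (by linarith)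
      · intro i hi
        have hi' : (i:ℝ) ≤ (j:ℝ) - 1 := by
          have : i + 1 ≤ j := Finset.mem_range.mp hi
          have : (i:ℝ) + 1 ≤ (j:ℝ) := by exact_mod_cast this
          linarith
        have hkn : (k:ℝ) ≤ (n:ℝ) := by exact_mod_cast hk
        rw [hc, div_mul_eq_mul_div, div_le_iff₀ hn0]
        nlinarith [mul_nonneg (sub_nonneg.mpr hi') (sub_nonneg.mpr hkn)]
    have hP : c ^ j ≤ (∏ i ∈ Finset.range j, ((k : ℝ) - i)) / ∏ i ∈ Finset.range j, ((n : ℝ) - i) := by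
      rw [le_div_iff₀ hden0]
      exact hkey
    have : c ≤ akrNode n j k := by
      have h1 : (c ^ j) ^ ((j:ℝ)⁻¹) ≤ akrNode n j k :=
        Real.rpow_le_rpow (by positivity) hP (by positivity)
      rwa [Real.pow_rpow_inv_natCast hc0 hj0] at h1
    have : (k:ℝ) / n - akrNode n j k ≤ (k:ℝ)/n - c := by linarith
    calc (k:ℝ) / n - akrNode n j k ≤ (k:ℝ)/n - c := this
      _ = ((j:ℝ) - 1) / n := by rw [hc]; field_simp; ring
end
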